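/- arXiv:2212.09539 — 4 statements merged into one kernel-verified Lean document; each statement's English description precedes it below -/
import Mathlib

section
/- Let G be a finitely generated group acting geometrically on proper geodesic metric spaces Y and Y', and suppose (G,Y,X) and (G,Y',X) are Morse-injective hyperbolic projections for the same cobounded action of G on X. Then for any coarsely G-equivariant quasi-isometry Ψ: Y → Y', the induced bijection ∂Ψ: ∂₁Y → ∂₁Y' is a homeomorphism with respect to the pullback topologies T(G,Y,X) and T(G,Y',X). Consequently the topology T(G,Y,X) on the Morse boundary of the group G is independent of the choice of geometric action G ↷ Y. -/
noncomputable section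

open Filter Metric Set Topology

/-! ## Gromov products, hyperbolicity, and the visual boundary -/

/-- The Gromov product of `x` and `y` with respect to `o`. -/
def gromovProduct {X : Type*} [MetricSpace X] (o x y : X) : ℝ :=
  (dist o x + dist o y - dist x y) / 2

/-- A metric space is `δ`-hyperbolic if the Gromov product four-point condition holds. -/
def IsDeltaHyperbolic (X : Type*) [MetricSpace X] (δ : ℝ) : Prop :=
  ∀ o x y z : X, min (gromovProduct o x z) (gromovProduct o z y) - δ ≤ gromovProduct o x y

/-- A metric space is Gromov hyperbolic if it is `δ`-hyperbolic for some `δ ≥ 0`. -/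
def GromovHyperbolic (X : Type*) [MetricSpace X] : Prop :=
  ∃ δ : ℝ, 0 ≤ δ ∧ IsDeltaHyperbolic X δ

/-- A sequence converges to infinity if the Gromov products `(x_i | x_j)_o` tend to `∞`
(this is independent of the basepoint, so we quantify over all basepoints). -/
def ConvergesToInfinity {X : Type*} [MetricSpace X] (s : ℕ → X) : Prop :=
  ∀ o : X, Tendsto (fun p : ℕ × ℕ => gromovProduct o (s p.1) (s p.2)) atTop atTop

/-- Two sequences converging to infinity are equivalent if `(x_i | y_i)_o → ∞`. -/
def AsympEquiv {X : Type*} [MetricSpace X] (s t : ℕ → X) : Prop :=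
  ∀ o : X, Tendsto (fun i => gromovProduct o (s i) (t i)) atTop atTop

/-- Sequences converging to infinity. -/
abbrev BoundarySeq (X : Type*) [MetricSpace X] : Type _ :=
  { s : ℕ → X // ConvergesToInfinity s }

/-- The visual boundary (boundary at infinity) of a metric space:
equivalence classes of sequences converging to infinity. -/
def GromovBoundary (X : Type*) [MetricSpace X] : Type _ :=
  Quot (fun s t : BoundarySeq X => AsympEquiv s.1 t.1)

/-- The boundary point represented by a sequence converging to infinity. -/
def boundaryPt {X : Type*} [MetricSpace X] (s : BoundarySeq X) : GromovBoundary X :=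
  Quot.mk (fun s t : BoundarySeq X => AsympEquiv s.1 t.1) s

/-- The Gromov product of two boundary points with respect to `o`:
the infimum over representatives of the liminf of the Gromov products. -/
noncomputable def boundaryGromovProduct {X : Type*} [MetricSpace X] (o : X)
    (ξ η : GromovBoundary X) : ℝ :=
  sInf { r : ℝ | ∃ s t : BoundarySeq X, boundaryPt s = ξ ∧ boundaryPt t = η ∧
    r = liminf (fun i => gromovProduct o (s.1 i) (t.1 i)) atTop }

/-- The visual topology on the boundary at infinity, generated by the neighbourhood
bases `U_{o,R}(ξ) = {η | (ξ|η)_o > R}`. -/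
def visualTopology (X : Type*) [MetricSpace X] : TopologicalSpace (GromovBoundary X) :=
  TopologicalSpace.generateFrom
    { U : Set (GromovBoundary X) | ∃ (o : X) (ξ : GromovBoundary X) (R : ℝ),
        U = { η | R < boundaryGromovProduct o ξ η } }

/-- A path `γ : [a,∞) → X` defines the boundary point `ξ` if every monotone unbounded
sequence of parameters yields a sequence converging to infinity representing `ξ`. -/
def DefinesBoundaryPoint {X : Type*} [MetricSpace X] (γ : ℝ → X) (a : ℝ)
    (ξ : GromovBoundary X) : Prop :=
  ∀ t : ℕ → ℝ, (∀ i, a ≤ t i) → Monotone t → Tendsto t atTop atTop →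
    ∃ h : ConvergesToInfinity (fun i => γ (t i)), boundaryPt ⟨fun i => γ (t i), h⟩ = ξ

/-! ## Quasi-rulers, quasi-geodesics, coarse maps -/

/-- An unparametrised `D`-quasi-ruler on a (closed) interval `I ⊆ ℝ`. -/
structure IsQuasiRuler {X : Type*} [MetricSpace X] (D : ℝ) (I : Set ℝ) (γ : ℝ → X) : Prop where
  ruled : ∀ t ∈ I, ∀ s ∈ I, ∀ r ∈ I, t < s → s < r →
    dist (γ t) (γ s) + dist (γ s) (γ r) ≤ dist (γ t) (γ r) + D
  noJump : ∀ t₀ ∈ I, ∃ c : ℝ, c < D ∧ ∃ ε : ℝ, 0 < ε ∧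
    ∀ t ∈ I, |t - t₀| < ε → dist (γ t) (γ t₀) ≤ c

/-- A metric space admits a `D`-quasi-ruling if any two points are connected by an
unparametrised `D`-quasi-ruler. -/
def AdmitsQuasiRuling (X : Type*) [MetricSpace X] (D : ℝ) : Prop :=
  ∀ x y : X, ∃ (a b : ℝ) (γ : ℝ → X), a ≤ b ∧ γ a = x ∧ γ b = y ∧
    IsQuasiRuler D (Icc a b) γ

/-- `(K,C)`-coarsely Lipschitz maps. -/
def CoarselyLipschitzWith {Y X : Type*} [MetricSpace Y] [MetricSpace X]
    (K C : ℝ) (f : Y → X) : Prop :=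
  ∀ x y : Y, dist (f x) (f y) ≤ K * dist x y + C

def CoarselyLipschitz {Y X : Type*} [MetricSpace Y] [MetricSpace X] (f : Y → X) : Prop :=
  ∃ K C : ℝ, 1 ≤ K ∧ 0 ≤ C ∧ CoarselyLipschitzWith K C f

/-- `(K,C)`-quasi-isometric embeddings. -/
def IsQuasiIsometricEmbeddingWith {Y X : Type*} [MetricSpace Y] [MetricSpace X]
    (K C : ℝ) (f : Y → X) : Prop :=
  ∀ x y : Y, dist x y / K - C ≤ dist (f x) (f y) ∧ dist (f x) (f y) ≤ K * dist x y + C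

/-- `(K,C)`-quasi-isometries. -/
def IsQuasiIsometryWith {Y X : Type*} [MetricSpace Y] [MetricSpace X]
    (K C : ℝ) (f : Y → X) : Prop :=
  IsQuasiIsometricEmbeddingWith K C f ∧ ∀ x : X, ∃ y : Y, dist (f y) x ≤ C

def IsQuasiIsometry {Y X : Type*} [MetricSpace Y] [MetricSpace X] (f : Y → X) : Prop :=
  ∃ K C : ℝ, 1 ≤ K ∧ 0 ≤ C ∧ IsQuasiIsometryWith K C f

/-- `(K,C)`-quasi-geodesics parametrised over a subinterval `I ⊆ ℝ`. -/
def IsQuasiGeodesicOn {X : Type*} [MetricSpace X] (K C : ℝ) (I : Set ℝ) (γ : ℝ → X) : Prop :=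
  ∀ s ∈ I, ∀ t ∈ I, |s - t| / K - C ≤ dist (γ s) (γ t) ∧ dist (γ s) (γ t) ≤ K * |s - t| + C

/-- An unparametrised quasi-geodesic: a path admitting an orientation-preserving
reparametrisation which is a quasi-geodesic. -/
def IsUnparamQuasiGeodesicOn {X : Type*} [MetricSpace X] (I : Set ℝ) (γ : ℝ → X) : Prop :=
  ∃ (φ : ℝ → ℝ) (K C : ℝ), 1 ≤ K ∧ 0 ≤ C ∧ StrictMonoOn φ I ∧ BijOn φ I I ∧
    IsQuasiGeodesicOn K C I (fun t => γ (φ t))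

/-- A geodesic metric space: any two points are joined by an isometrically embedded segment. -/
def GeodesicSpace (Y : Type*) [MetricSpace Y] : Prop :=
  ∀ x y : Y, ∃ γ : ℝ → Y, γ 0 = x ∧ γ (dist x y) = y ∧
    ∀ s ∈ Icc (0 : ℝ) (dist x y), ∀ t ∈ Icc (0 : ℝ) (dist x y), dist (γ s) (γ t) = |s - t|

/-! ## Group actions -/

/-- The action of `G` is by isometries. -/
def IsometricAction (G X : Type*) [Group G] [MetricSpace X] [MulAction G X] : Prop :=
  ∀ g : G, Isometry (fun x : X => g • x)

/-- A cobounded action: translates of some bounded set cover the space. -/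
def CoboundedAction (G X : Type*) [Group G] [MetricSpace X] [MulAction G X] : Prop :=
  ∃ B : Set X, Bornology.IsBounded B ∧ ∀ x : X, ∃ g : G, g • x ∈ B

/-- A cocompact action: translates of some compact set cover the space. -/
def CocompactAction (G Y : Type*) [Group G] [MetricSpace Y] [MulAction G Y] : Prop :=
  ∃ K : Set Y, IsCompact K ∧ ∀ y : Y, ∃ g : G, g • y ∈ K

/-- A geometric action: isometric, properly discontinuous and cocompact. -/
def GeometricAction (G Y : Type*) [Group G] [MetricSpace Y] [MulAction G Y] : Prop :=
  IsometricAction G Y ∧ ProperlyDiscontinuousSMul G Y ∧ CocompactAction G Y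

/-- Coarse `G`-equivariance of a map between two `G`-spaces. -/
def CoarselyEquivariant (G : Type*) {Y X : Type*} [Group G] [MetricSpace Y] [MetricSpace X]
    [MulAction G Y] [MulAction G X] (f : Y → X) : Prop :=
  ∃ C : ℝ, 0 ≤ C ∧ ∀ (g : G) (y : Y), dist (f (g • y)) (g • f y) ≤ C

/-- A hyperbolic projection `(G, Y, X)`: a finitely generated group `G` acting geometrically
on a geodesic metric space `Y` and coboundedly by isometries on a Gromov hyperbolic space `X`
admitting a `D`-quasi-ruling. -/
structure HyperbolicProjection (G Y X : Type*) [Group G] [MetricSpace Y] [MetricSpace X]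
    [MulAction G Y] [MulAction G X] : Prop where
  fg : Group.FG G
  geodesicY : GeodesicSpace Y
  geometricY : GeometricAction G Y
  isometricX : IsometricAction G X
  coboundedX : CoboundedAction G X
  hyperbolicX : GromovHyperbolic X
  ruledX : ∃ D : ℝ, 0 ≤ D ∧ AdmitsQuasiRuling X D

/-- An induced projection map of a hyperbolic projection: any coarsely `G`-equivariant,
coarsely Lipschitz map `Y → X`. -/
def InducedProjection (G : Type*) {Y X : Type*} [Group G] [MetricSpace Y] [MetricSpace X]
    [MulAction G Y] [MulAction G X] (p : Y → X) : Prop :=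
  CoarselyEquivariant G p ∧ CoarselyLipschitz p
/-! ## Morse and sublinearly Morse boundaries -/

/-- Finite Hausdorff distance between two subsets. -/
def FiniteHausdorffDist {Y : Type*} [MetricSpace Y] (A B : Set Y) : Prop :=
  EMetric.hausdorffEdist A B < ⊤

/-- A quasi-geodesic ray, parametrised over `[0, ∞)`. -/
def IsQuasiGeodesicRay {Y : Type*} [MetricSpace Y] (γ : ℝ → Y) : Prop :=
  ∃ K C : ℝ, 1 ≤ K ∧ 0 ≤ C ∧ IsQuasiGeodesicOn K C (Ici 0) γ

/-- A geodesic ray, parametrised over `[0, ∞)`. -/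
def IsGeodesicRay {Y : Type*} [MetricSpace Y] (γ : ℝ → Y) : Prop :=
  ∀ s ∈ Ici (0 : ℝ), ∀ t ∈ Ici (0 : ℝ), dist (γ s) (γ t) = |s - t|

/-- A Morse subset: there is a gauge `μ` such that every `(K,C)`-quasi-geodesic segment with
endpoints on `Z` stays in the `μ(K,C)`-neighbourhood of `Z`. -/
def IsMorseSet {Y : Type*} [MetricSpace Y] (Z : Set Y) : Prop :=
  ∃ μ : ℝ → ℝ → ℝ, ∀ K C : ℝ, 1 ≤ K → 0 ≤ C → ∀ (a b : ℝ) (β : ℝ → Y), a ≤ b →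
    IsQuasiGeodesicOn K C (Icc a b) β → β a ∈ Z → β b ∈ Z →
    ∀ t ∈ Icc a b, infDist (β t) Z ≤ μ K C

/-- Morse quasi-geodesic rays. -/
abbrev MorseRay (Y : Type*) [MetricSpace Y] : Type _ :=
  { γ : ℝ → Y // IsQuasiGeodesicRay γ ∧ IsMorseSet (γ '' Ici 0) }

/-- The Morse boundary `∂₁ Y`: Morse quasi-geodesic rays modulo finite Hausdorff distance. -/
def MorseBoundary (Y : Type*) [MetricSpace Y] : Type _ :=
  Quot (fun γ γ' : MorseRay Y => FiniteHausdorffDist (γ.1 '' Ici 0) (γ'.1 '' Ici 0))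

def morsePt {Y : Type*} [MetricSpace Y] (γ : MorseRay Y) : MorseBoundary Y :=
  Quot.mk (fun γ γ' : MorseRay Y => FiniteHausdorffDist (γ.1 '' Ici 0) (γ'.1 '' Ici 0)) γ

/-- Morse-injectivity of a projection map: every unbounded Morse geodesic (ray or bi-infinite)
in `Y` projects to an unbounded unparametrised quasi-geodesic in `X`. -/
def MorseInjective {Y X : Type*} [MetricSpace Y] [MetricSpace X] (p : Y → X) : Prop :=
  ∀ (I : Set ℝ) (γ : ℝ → Y), (I = Ici (0 : ℝ) ∨ I = univ) →
    (∀ s ∈ I, ∀ t ∈ I, dist (γ s) (γ t) = |s - t|) →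
    IsMorseSet (γ '' I) → ¬ Bornology.IsBounded (γ '' I) →
    IsUnparamQuasiGeodesicOn I (fun t => p (γ t)) ∧
      ¬ Bornology.IsBounded ((fun t => p (γ t)) '' I)

/-- `f` is the boundary map `∂p` induced by the projection `p`: the class of every Morse
quasi-geodesic ray `γ` is sent to the boundary point defined by `p ∘ γ`. -/
def IsInducedBoundaryMap {Y X : Type*} [MetricSpace Y] [MetricSpace X] (p : Y → X)
    (f : MorseBoundary Y → GromovBoundary X) : Prop :=
  ∀ γ : MorseRay Y, DefinesBoundaryPoint (fun t => p (γ.1 t)) 0 (f (morsePt γ))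

/-- `f` is the boundary map `∂Ψ` induced by a quasi-isometry `Ψ` on Morse boundaries:
the class of `γ` is sent to the class of `Ψ ∘ γ`. -/
def IsInducedMorseBoundaryMap {Y Y' : Type*} [MetricSpace Y] [MetricSpace Y'] (Ψ : Y → Y')
    (f : MorseBoundary Y → MorseBoundary Y') : Prop :=
  ∀ γ : MorseRay Y,
    ∃ h : IsQuasiGeodesicRay (fun t => Ψ (γ.1 t)) ∧
        IsMorseSet ((fun t => Ψ (γ.1 t)) '' Ici 0),
      f (morsePt γ) = morsePt (⟨fun t => Ψ (γ.1 t), h⟩ : MorseRay Y')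

/-- `f` is the boundary map `∂Φ` induced by a map `Φ` between hyperbolic spaces:
the class of a sequence `(x_i)` is sent to the class of `(Φ x_i)`. -/
def IsInducedGromovBoundaryMap {X X' : Type*} [MetricSpace X] [MetricSpace X'] (Φ : X → X')
    (f : GromovBoundary X → GromovBoundary X') : Prop :=
  ∀ s : BoundarySeq X, ∃ h : ConvergesToInfinity (fun i => Φ (s.1 i)),
    f (boundaryPt s) = boundaryPt (⟨fun i => Φ (s.1 i), h⟩ : BoundarySeq X')

/-! ## Sublinear functions and `κ`-Morse boundaries -/

/-- A sublinear function: monotone increasing, concave, non-negative, with `κ(t)/t → 0`. -/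
def IsSublinear (κ : ℝ → ℝ) : Prop :=
  (∀ t ∈ Ici (0 : ℝ), 0 ≤ κ t) ∧ MonotoneOn κ (Ici 0) ∧ ConcaveOn ℝ (Ici 0) κ ∧
    Tendsto (fun t => κ t / t) atTop (nhds 0)

/-- The `(κ, n)`-neighbourhood of `Z` with respect to the basepoint `o`. -/
def kappaNbhd {Y : Type*} [MetricSpace Y] (o : Y) (κ : ℝ → ℝ) (Z : Set Y) (n : ℝ) : Set Y :=
  { y | infDist y Z ≤ n * κ (dist o y) }

/-- `Z` is `κ`-Morse with a specified Morse gauge `N`. -/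
def IsKappaMorseWith {Y : Type*} [MetricSpace Y] (o : Y) (κ : ℝ → ℝ) (N : ℝ → ℝ → ℝ)
    (Z : Set Y) : Prop :=
  ∀ K C : ℝ, 1 ≤ K → 0 ≤ C → ∀ (a b : ℝ) (β : ℝ → Y), a ≤ b →
    IsQuasiGeodesicOn K C (Icc a b) β → β a ∈ Z → β b ∈ Z →
    ∀ t ∈ Icc a b, β t ∈ kappaNbhd o κ Z (N K C)

/-- `Z` is `κ`-Morse. -/
def IsKappaMorse {Y : Type*} [MetricSpace Y] (o : Y) (κ : ℝ → ℝ) (Z : Set Y) : Prop :=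
  ∃ N : ℝ → ℝ → ℝ, IsKappaMorseWith o κ N Z

/-- Two sets `κ`-fellow travel (are `κ`-close) if each lies in a `κ`-neighbourhood
of the other. -/
def KappaClose {Y : Type*} [MetricSpace Y] (o : Y) (κ : ℝ → ℝ) (A B : Set Y) : Prop :=
  (∃ n : ℝ, 0 < n ∧ A ⊆ kappaNbhd o κ B n) ∧ (∃ n : ℝ, 0 < n ∧ B ⊆ kappaNbhd o κ A n)

/-- `κ`-Morse quasi-geodesic rays. -/
abbrev KappaMorseRay (Y : Type*) [MetricSpace Y] (o : Y) (κ : ℝ → ℝ) : Type _ :=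
  { γ : ℝ → Y // IsQuasiGeodesicRay γ ∧ IsKappaMorse o κ (γ '' Ici 0) }

/-- The `κ`-Morse boundary `∂_κ Y`: `κ`-Morse quasi-geodesic rays modulo `κ`-fellow
travelling. -/
def KappaBoundary (Y : Type*) [MetricSpace Y] (o : Y) (κ : ℝ → ℝ) : Type _ :=
  Quot (fun γ γ' : KappaMorseRay Y o κ => KappaClose o κ (γ.1 '' Ici 0) (γ'.1 '' Ici 0))

def kappaPt {Y : Type*} [MetricSpace Y] {o : Y} {κ : ℝ → ℝ} (γ : KappaMorseRay Y o κ) :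
    KappaBoundary Y o κ :=
  Quot.mk (fun γ γ' : KappaMorseRay Y o κ => KappaClose o κ (γ.1 '' Ici 0) (γ'.1 '' Ici 0)) γ

/-- `κ`-injectivity of a hyperbolic projection with projection map `p`: the projection of every
`κ`-Morse quasi-geodesic ray defines a boundary point, and two `κ`-Morse quasi-geodesic rays
are `κ`-close iff their projections define the same boundary point. -/
def KappaInjective {Y X : Type*} [MetricSpace Y] [MetricSpace X] (o : Y) (κ : ℝ → ℝ)
    (p : Y → X) : Prop :=
  (∀ γ : ℝ → Y, IsQuasiGeodesicRay γ → IsKappaMorse o κ (γ '' Ici 0) →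
    ∃ ξ : GromovBoundary X, DefinesBoundaryPoint (fun t => p (γ t)) 0 ξ) ∧
  (∀ γ γ' : ℝ → Y, IsQuasiGeodesicRay γ → IsKappaMorse o κ (γ '' Ici 0) →
    IsQuasiGeodesicRay γ' → IsKappaMorse o κ (γ' '' Ici 0) →
    (KappaClose o κ (γ '' Ici 0) (γ' '' Ici 0) ↔
      ∃ ξ : GromovBoundary X, DefinesBoundaryPoint (fun t => p (γ t)) 0 ξ ∧
        DefinesBoundaryPoint (fun t => p (γ' t)) 0 ξ))

/-- `f` is the boundary map `∂p` induced by `p` on the `κ`-Morse boundary. -/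
def IsInducedKappaBoundaryMap {Y X : Type*} [MetricSpace Y] [MetricSpace X] (o : Y)
    (κ : ℝ → ℝ) (p : Y → X) (f : KappaBoundary Y o κ → GromovBoundary X) : Prop :=
  ∀ γ : KappaMorseRay Y o κ, DefinesBoundaryPoint (fun t => p (γ.1 t)) 0 (f (kappaPt γ))

/-- `f` is the boundary map `∂Ψ` induced by a quasi-isometry `Ψ` on `κ`-Morse boundaries. -/
def IsInducedKappaQIMap {Y Y' : Type*} [MetricSpace Y] [MetricSpace Y'] (o : Y) (o' : Y')
    (κ : ℝ → ℝ) (Ψ : Y → Y')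
    (f : KappaBoundary Y o κ → KappaBoundary Y' o' κ) : Prop :=
  ∀ γ : KappaMorseRay Y o κ,
    ∃ h : IsQuasiGeodesicRay (fun t => Ψ (γ.1 t)) ∧
        IsKappaMorse o' κ ((fun t => Ψ (γ.1 t)) '' Ici 0),
      f (kappaPt γ) = kappaPt (⟨fun t => Ψ (γ.1 t), h⟩ : KappaMorseRay Y' o' κ)
/-! ## Coarse medians -/

/-- The median of three real numbers. -/
def realMedian (a b c : ℝ) : ℝ := max (min a b) (min (max a b) c)

/-- A coarse median with constant `C`. -/
def IsCoarseMedianWith {Y : Type*} [MetricSpace Y] (C : ℝ) (μ : Y → Y → Y → Y) : Prop :=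
  (∀ a b c : Y, μ a a b = a ∧ μ a b c = μ b a c ∧ μ a b c = μ b c a) ∧
  (∀ a b c x : Y, dist (μ (μ a x b) x c) (μ a x (μ b x c)) ≤ C) ∧
  (∀ a b c x : Y, dist (μ a b c) (μ x b c) ≤ C * dist a x + C)

/-- A coarse median. -/
def IsCoarseMedian {Y : Type*} [MetricSpace Y] (μ : Y → Y → Y → Y) : Prop :=
  ∃ C : ℝ, 0 ≤ C ∧ IsCoarseMedianWith C μ

/-- A coarse median map between coarse median spaces. -/
def IsCoarseMedianMap {Y Y' : Type*} [MetricSpace Y] [MetricSpace Y']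
    (μ : Y → Y → Y → Y) (μ' : Y' → Y' → Y' → Y') (f : Y → Y') : Prop :=
  ∃ D : ℝ, 0 ≤ D ∧ ∀ a b c : Y, dist (f (μ a b c)) (μ' (f a) (f b) (f c)) ≤ D

/-- A `G`-invariant coarse median (invariance up to uniformly bounded distance). -/
def EquivariantMedian (G : Type*) {Y : Type*} [Group G] [MetricSpace Y] [MulAction G Y]
    (μ : Y → Y → Y → Y) : Prop :=
  ∃ C : ℝ, 0 ≤ C ∧ ∀ (g : G) (a b c : Y), dist (g • μ a b c) (μ (g • a) (g • b) (g • c)) ≤ C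

/-- A `D`-median ray: a coarse median map (with constant `D`) from `[0,∞)`
with the standard median of `ℝ`. -/
def IsMedianRayWith {Y : Type*} [MetricSpace Y] (D : ℝ) (μ : Y → Y → Y → Y)
    (γ : ℝ → Y) : Prop :=
  ∀ a ∈ Ici (0 : ℝ), ∀ b ∈ Ici (0 : ℝ), ∀ c ∈ Ici (0 : ℝ),
    dist (γ (realMedian a b c)) (μ (γ a) (γ b) (γ c)) ≤ D

/-- A `μ`-median ray. -/
def IsMedianRay {Y : Type*} [MetricSpace Y] (μ : Y → Y → Y → Y) (γ : ℝ → Y) : Prop :=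
  ∃ D : ℝ, 0 ≤ D ∧ IsMedianRayWith D μ γ

/-- `∂_κ Y` has `μ`-median representatives: every point of the `κ`-Morse boundary is
represented by a `μ`-median quasi-geodesic ray. -/
def HasMedianRepresentatives {Y : Type*} [MetricSpace Y] (o : Y) (κ : ℝ → ℝ)
    (μ : Y → Y → Y → Y) : Prop :=
  ∀ γ : KappaMorseRay Y o κ, ∃ γ' : KappaMorseRay Y o κ, IsMedianRay μ γ'.1 ∧
    KappaClose o κ (γ.1 '' Ici 0) (γ'.1 '' Ici 0)

/-- `(κ, μ)`-injectivity of a hyperbolic projection with projection map `p`. -/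
def KappaMuInjective {Y X : Type*} [MetricSpace Y] [MetricSpace X] (o : Y) (κ : ℝ → ℝ)
    (μ : Y → Y → Y → Y) (p : Y → X) : Prop :=
  (∀ γ : ℝ → Y, IsQuasiGeodesicRay γ → IsKappaMorse o κ (γ '' Ici 0) → IsMedianRay μ γ →
    ∃ ξ : GromovBoundary X, DefinesBoundaryPoint (fun t => p (γ t)) 0 ξ) ∧
  (∀ γ γ' : ℝ → Y, IsQuasiGeodesicRay γ → IsKappaMorse o κ (γ '' Ici 0) → IsMedianRay μ γ →
    IsQuasiGeodesicRay γ' → IsKappaMorse o κ (γ' '' Ici 0) → IsMedianRay μ γ' →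
    (KappaClose o κ (γ '' Ici 0) (γ' '' Ici 0) ↔
      ∃ ξ : GromovBoundary X, DefinesBoundaryPoint (fun t => p (γ t)) 0 ξ ∧
        DefinesBoundaryPoint (fun t => p (γ' t)) 0 ξ))

/-- `f` is the boundary map `∂p` induced by `p` on the `κ`-Morse boundary, defined via
`μ`-median representatives. -/
def IsInducedKappaMuBoundaryMap {Y X : Type*} [MetricSpace Y] [MetricSpace X] (o : Y)
    (κ : ℝ → ℝ) (μ : Y → Y → Y → Y) (p : Y → X)
    (f : KappaBoundary Y o κ → GromovBoundary X) : Prop :=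
  ∀ γ : KappaMorseRay Y o κ, IsMedianRay μ γ.1 →
    DefinesBoundaryPoint (fun t => p (γ.1 t)) 0 (f (kappaPt γ))
/-! ## Trees and Cantor chains -/

/-- A geodesic ray from `root` in the graph `T`. -/
structure TreeRay {V : Type*} (T : SimpleGraph V) (root : V) where
  toFun : ℕ → V
  init : toFun 0 = root
  adj : ∀ n, T.Adj (toFun n) (toFun (n + 1))
  inj : Function.Injective toFun

/-- The visual topology on the space of rays from `root`, generated by the sets
`U_v` of rays passing through a vertex `v`. -/
def treeTopology {V : Type*} (T : SimpleGraph V) (root : V) :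
    TopologicalSpace (TreeRay T root) :=
  TopologicalSpace.generateFrom
    { U : Set (TreeRay T root) | ∃ v : V, U = { r | ∃ n, r.toFun n = v } }

/-- The rays from `root` that lie in the subgraph `S`. -/
def raysIn {V : Type*} {T : SimpleGraph V} (root : V) (S : T.Subgraph) :
    Set (TreeRay T root) :=
  { r | ∀ n, S.Adj (r.toFun n) (r.toFun (n + 1)) }

/-- Every vertex has countably infinite degree. -/
def CountablyBranching {V : Type*} (T : SimpleGraph V) : Prop :=
  ∀ v : V, (T.neighborSet v).Countable ∧ (T.neighborSet v).Infinite

/-- A nested family of locally finite subtrees, all of whose vertices have degree at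
least three, containing the root. -/
def SubtreeFamily {V : Type*} (T : SimpleGraph V) (root : V) (S : ℕ → T.Subgraph) : Prop :=
  (∀ i, root ∈ (S i).verts) ∧
  (∀ i, (S i).Connected) ∧
  (∀ i, ∀ v ∈ (S i).verts, ((S i).neighborSet v).Finite) ∧
  (∀ i, ∀ v ∈ (S i).verts, 3 ≤ ((S i).neighborSet v).ncard) ∧
  (∀ i, S i ≤ S (i + 1))

/-- The family is strongly entwined: each vertex of `S i` has strictly larger degree
in `S (i+1)`. -/
def StronglyEntwined {V : Type*} (T : SimpleGraph V) (S : ℕ → T.Subgraph) : Prop :=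
  ∀ i, ∀ v ∈ (S i).verts, (S i).neighborSet v ⊂ (S (i + 1)).neighborSet v

/-- The family fills `T`: every edge of `T` lies in some `S i`. -/
def FillsTree {V : Type*} (T : SimpleGraph V) (S : ℕ → T.Subgraph) : Prop :=
  ∀ u v : V, T.Adj u v → ∃ i, (S i).Adj u v

/-- The subtree spanned (convex hull from the root) by a family of rays from the root. -/
def raysHull {V : Type*} {T : SimpleGraph V} (root : V) (R : Set (TreeRay T root)) :
    T.Subgraph where
  verts := { v | ∃ r ∈ R, ∃ n, r.toFun n = v }
  Adj u v := ∃ r ∈ R, ∃ n, (r.toFun n = u ∧ r.toFun (n + 1) = v) ∨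
    (r.toFun n = v ∧ r.toFun (n + 1) = u)
  adj_sub := by
    rintro u v ⟨r, -, n, h | h⟩
    · rw [← h.1, ← h.2]; exact r.adj n
    · rw [← h.1, ← h.2]; exact (r.adj n).symm
  edge_vert := by
    rintro u v ⟨r, hr, n, h | h⟩
    · exact ⟨r, hr, n, h.1⟩
    · exact ⟨r, hr, n + 1, h.2⟩
  symm := by
    constructor
    rintro u v ⟨r, hr, n, h⟩
    exact ⟨r, hr, n, h.symm⟩

/-- A Cantor chain: a topological space homeomorphic to the union `⋃ i ∂∞ T_i ⊆ ∂∞ T∞`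
for a filling family of strongly entwined subtrees of the tree `T∞` of countably
infinite valence. -/
def IsCantorChain (Z : Type*) (τ : TopologicalSpace Z) : Prop :=
  ∃ (V : Type) (T : SimpleGraph V) (root : V) (S : ℕ → T.Subgraph),
    T.IsTree ∧ CountablyBranching T ∧ SubtreeFamily T root S ∧
    StronglyEntwined T S ∧ FillsTree T S ∧
    ∃ e : Z → TreeRay T root, Function.Injective e ∧
      range e = ⋃ i, raysIn root (S i) ∧
      τ = TopologicalSpace.induced e (treeTopology T root)

/-! ### Auxiliary lemmas for Statement 1 -/

private lemma qgLowerHelper (K K₁ C₁ E x d L : ℝ) (hK : 1 ≤ K) (hC₁ : 0 ≤ C₁) (hE : 0 ≤ E)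
    (h1 : x / K₁ - C₁ ≤ d) (h2 : d ≤ K * L + E) : x / (K * K₁) - K * (C₁ + E) ≤ L := by
  have hK0 : (0:ℝ) < K := by linarith
  have h4 : x / K₁ ≤ K * L + E + C₁ := by linarith
  have h5 : x / (K * K₁) ≤ (K * L + E + C₁) / K := by
    rw [mul_comm K K₁, ← div_div]
    exact div_le_div_of_nonneg_right h4 hK0.le
  have h6 : (K * L + E + C₁) / K ≤ L + K * (C₁ + E) := by
    rw [div_le_iff₀ hK0]
    have hKK : 1 ≤ K * K := by nlinarith
    nlinarith [mul_le_mul_of_nonneg_right hKK (show (0:ℝ) ≤ C₁ + E by linarith)]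
  linarith

private lemma asympEquiv_of_close {X : Type*} [MetricSpace X] (s t : ℕ → X) (M : ℝ)
    (hst : ∀ i, dist (s i) (t i) ≤ M) (hs : ConvergesToInfinity s) : AsympEquiv s t := by
  intro o
  have hdiag : Tendsto (fun i : ℕ => ((i, i) : ℕ × ℕ)) atTop atTop := by
    rw [← Filter.prod_atTop_atTop_eq]
    exact tendsto_id.prodMk tendsto_id
  have h1 : Tendsto (fun i : ℕ => dist o (s i)) atTop atTop := by
    apply tendsto_atTop_mono _ ((hs o).comp hdiag)
    intro i
    simp only [Function.comp_apply, gromovProduct, dist_self]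
    linarith [dist_nonneg (x := o) (y := s i)]
  have h2 : Tendsto (fun i : ℕ => dist o (s i) - M) atTop atTop := by
    simpa [sub_eq_add_neg] using tendsto_atTop_add_const_right atTop (-M) h1
  apply tendsto_atTop_mono _ h2
  intro i
  have h3 : dist o (s i) ≤ dist o (t i) + dist (s i) (t i) := by
    calc dist o (s i) ≤ dist o (t i) + dist (t i) (s i) := dist_triangle o (t i) (s i)
    _ = dist o (t i) + dist (s i) (t i) := by rw [dist_comm (t i) (s i)]
  have h4 := hst i
  unfold gromovProduct
  linarith [dist_nonneg (x := s i) (y := t i)]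

private lemma fhd_of_ptwise {Y' : Type*} [MetricSpace Y'] (f g : ℝ → Y') (C : ℝ)
    (h : ∀ t, dist (f t) (g t) ≤ C) : FiniteHausdorffDist (f '' Ici 0) (g '' Ici 0) := by
  unfold FiniteHausdorffDist
  have hb : EMetric.hausdorffEdist (f '' Ici 0) (g '' Ici 0) ≤ ENNReal.ofReal C := by
    apply EMetric.hausdorffEdist_le_of_infEdist
    · rintro x ⟨u, hu, rfl⟩
      calc EMetric.infEdist (f u) (g '' Ici 0) ≤ edist (f u) (g u) :=
            EMetric.infEdist_le_edist_of_mem (Set.mem_image_of_mem _ hu)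
        _ ≤ ENNReal.ofReal C := by rw [edist_dist]; exact ENNReal.ofReal_le_ofReal (h u)
    · rintro x ⟨u, hu, rfl⟩
      calc EMetric.infEdist (g u) (f '' Ici 0) ≤ edist (g u) (f u) :=
            EMetric.infEdist_le_edist_of_mem (Set.mem_image_of_mem _ hu)
        _ ≤ ENNReal.ofReal C := by
            rw [edist_dist]
            exact ENNReal.ofReal_le_ofReal ((dist_comm (g u) (f u)) ▸ h u)
  exact lt_of_le_of_lt hb ENNReal.ofReal_lt_top

private lemma fhd_pullback {Y Y' : Type*} [MetricSpace Y] [MetricSpace Y'] (Ψ : Y → Y')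
    (K C : ℝ) (hK : 1 ≤ K) (hemb : IsQuasiIsometricEmbeddingWith K C Ψ)
    (A B : Set Y) (h : FiniteHausdorffDist (Ψ '' A) (Ψ '' B)) : FiniteHausdorffDist A B := by
  have hK0 : (0:ℝ) < K := lt_of_lt_of_le one_pos hK
  unfold FiniteHausdorffDist at h ⊢
  set H := EMetric.hausdorffEdist (Ψ '' A) (Ψ '' B) with hH
  have hHne : H ≠ ⊤ := h.ne
  set e : ℝ := (H + 1).toReal with he
  have key : ∀ A' B' : Set Y, EMetric.hausdorffEdist (Ψ '' A') (Ψ '' B') = H →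
      ∀ x ∈ A', EMetric.infEdist x B' ≤ ENNReal.ofReal (K * (e + C)) := by
    intro A' B' hA'B' x hx
    have h1 : EMetric.infEdist (Ψ x) (Ψ '' B') ≤ H := by
      rw [← hA'B']
      exact EMetric.infEdist_le_hausdorffEdist_of_mem (Set.mem_image_of_mem _ hx)
    have h2 : EMetric.infEdist (Ψ x) (Ψ '' B') < H + 1 :=
      lt_of_le_of_lt h1 (ENNReal.lt_add_right hHne one_ne_zero)
    obtain ⟨w, hw, hw2⟩ := EMetric.infEdist_lt_iff.mp h2
    obtain ⟨b, hb, rfl⟩ := hw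
    have hd : dist (Ψ x) (Ψ b) ≤ e := by
      rw [dist_edist]
      exact ENNReal.toReal_mono (ENNReal.add_ne_top.mpr ⟨hHne, ENNReal.one_ne_top⟩) hw2.le
    have hd2 : dist x b ≤ K * (e + C) := by
      have h1' := (hemb x b).1
      have h3 : dist x b / K ≤ e + C := by linarith
      have h4 := (div_le_iff₀ hK0).mp h3
      nlinarith
    calc EMetric.infEdist x B' ≤ edist x b := EMetric.infEdist_le_edist_of_mem hb
      _ = ENNReal.ofReal (dist x b) := by rw [edist_dist]
      _ ≤ _ := ENNReal.ofReal_le_ofReal hd2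
  have hAB : EMetric.hausdorffEdist A B ≤ ENNReal.ofReal (K * (e + C)) :=
    EMetric.hausdorffEdist_le_of_infEdist (key A B rfl)
      (key B A (by exact Metric.hausdorffEDist_comm))
  exact lt_of_le_of_lt hAB ENNReal.ofReal_lt_top

private lemma morse_exact {Y : Type*} [MetricSpace Y] (γ γ' : MorseRay Y)
    (h : morsePt γ = morsePt γ') :
    FiniteHausdorffDist (γ.1 '' Ici 0) (γ'.1 '' Ici 0) := by
  have h2 := Quot.eqvGen_exact h
  clear h
  induction h2 with
  | rel x y hxy => exact hxy
  | refl x =>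
      unfold FiniteHausdorffDist
      rw [show EMetric.hausdorffEdist (x.1 '' Ici 0) (x.1 '' Ici 0) = 0 from Metric.hausdorffEDist_self]
      exact ENNReal.zero_lt_top
  | symm x y hxy ih =>
      unfold FiniteHausdorffDist at ih ⊢
      rwa [show EMetric.hausdorffEdist (y.1 '' Ici 0) (x.1 '' Ici 0) = EMetric.hausdorffEdist (x.1 '' Ici 0) (y.1 '' Ici 0) from Metric.hausdorffEDist_comm]
  | trans x y z hxy hyz ih1 ih2 =>
      exact lt_of_le_of_lt (EMetric.hausdorffEdist_triangle)
        (ENNReal.add_lt_top.mpr ⟨ih1, ih2⟩)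

private lemma morse_image {Y Y' : Type*} [MetricSpace Y] [MetricSpace Y']
    (Ψ : Y → Y') (Φ : Y' → Y) (K C : ℝ) (hK : 1 ≤ K) (hC : 0 ≤ C)
    (hemb : IsQuasiIsometricEmbeddingWith K C Ψ)
    (hΦ : ∀ x, dist (Ψ (Φ x)) x ≤ C)
    (Z' : Set Y') (hZ' : Z'.Nonempty) (hM : IsMorseSet Z') :
    IsMorseSet (Φ '' Z') := by
  obtain ⟨μ', hμ'⟩ := hM
  have hK0 : (0:ℝ) < K := lt_of_lt_of_le one_pos hK
  have hlow : ∀ a b : Y, dist a b ≤ K * (dist (Ψ a) (Ψ b) + C) := by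
    intro a b
    have h1 := (hemb a b).1
    have h2 : dist a b / K ≤ dist (Ψ a) (Ψ b) + C := by linarith
    have h3 := (div_le_iff₀ hK0).mp h2
    nlinarith
  refine ⟨fun K₁ C₁ => K * (max 0 (μ' (K * K₁) (K * (C₁ + 3 * K * C))) + 1 + 2 * C), ?_⟩
  intro K₁ C₁ hK₁ hC₁ a b β hab hβ hβa hβb t ht
  have hμnn : 0 ≤ K * (max 0 (μ' (K * K₁) (K * (C₁ + 3 * K * C))) + 1 + 2 * C) := by
    have := le_max_left (0:ℝ) (μ' (K * K₁) (K * (C₁ + 3 * K * C)))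
    nlinarith
  by_cases hta : t = a
  · rw [hta, Metric.infDist_zero_of_mem hβa]; exact hμnn
  by_cases htb : t = b
  · rw [htb, Metric.infDist_zero_of_mem hβb]; exact hμnn
  have hta' : a < t := lt_of_le_of_ne ht.1 (Ne.symm hta)
  have htb' : t < b := lt_of_le_of_ne ht.2 htb
  have hab' : a < b := lt_trans hta' htb'
  obtain ⟨za, hza, hza2⟩ := hβa
  obtain ⟨zb, hzb, hzb2⟩ := hβb
  set β₁ : ℝ → Y' := fun r => if r = a then za else if r = b then zb else Ψ (β r) with hβ₁def
  have hclose : ∀ r, dist (β₁ r) (Ψ (β r)) ≤ C := by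
    intro r
    by_cases h1 : r = a
    · subst h1
      simp only [hβ₁def, if_pos rfl]
      rw [← hza2, dist_comm]
      exact hΦ za
    by_cases h2 : r = b
    · subst h2
      simp only [hβ₁def, if_neg h1, if_pos rfl]
      rw [← hzb2, dist_comm]
      exact hΦ zb
    · simp only [hβ₁def, if_neg h1, if_neg h2, dist_self]
      exact hC
  have hqg₁ : IsQuasiGeodesicOn (K * K₁) (K * (C₁ + 3 * K * C)) (Icc a b) β₁ := by
    intro s hs r hr
    obtain ⟨h1l, h1u⟩ := hβ s hs r hr
    have hDl := (hemb (β s) (β r)).1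
    have hDu := (hemb (β s) (β r)).2
    have hc1 := hclose s
    have hc2 := hclose r
    have htri1 : dist (β₁ s) (β₁ r) ≤ dist (Ψ (β s)) (Ψ (β r)) + 2 * C := by
      have h4 := dist_triangle4 (β₁ s) (Ψ (β s)) (Ψ (β r)) (β₁ r)
      have h5 := dist_comm (Ψ (β r)) (β₁ r)
      linarith [hclose r]
    have htri2 : dist (Ψ (β s)) (Ψ (β r)) ≤ dist (β₁ s) (β₁ r) + 2 * C := by
      have h4 := dist_triangle4 (Ψ (β s)) (β₁ s) (β₁ r) (Ψ (β r))
      have h5 := dist_comm (Ψ (β s)) (β₁ s)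
      linarith
    constructor
    · have hlo := hlow (β s) (β r)
      have h2 : dist (β s) (β r) ≤ K * dist (β₁ s) (β₁ r) + 3 * K * C := by nlinarith
      exact qgLowerHelper K K₁ C₁ (3 * K * C) |s - r| _ _ hK hC₁ (by nlinarith) h1l h2
    · have h2 : dist (β₁ s) (β₁ r) ≤ K * dist (β s) (β r) + 3 * C := by nlinarith
      nlinarith [mul_le_mul_of_nonneg_left h1u hK0.le,
        mul_nonneg (mul_nonneg hK0.le hK0.le) hC, mul_nonneg (sub_nonneg.mpr hK) hC]
  have hend_a : β₁ a ∈ Z' := by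
    simp only [hβ₁def, if_pos rfl]; exact hza
  have hend_b : β₁ b ∈ Z' := by
    simp only [hβ₁def, if_neg hab'.ne', if_pos rfl]; exact hzb
  have hbnd := hμ' (K * K₁) (K * (C₁ + 3 * K * C))
    (by nlinarith [mul_le_mul_of_nonneg_left hK₁ (by linarith : (0:ℝ) ≤ K)])
    (by nlinarith [mul_nonneg hK0.le hC₁, mul_nonneg (mul_nonneg hK0.le hK0.le) hC])
    a b β₁ hab hqg₁ hend_a hend_b t ht
  set m := μ' (K * K₁) (K * (C₁ + 3 * K * C)) with hm
  have hβ₁t : β₁ t = Ψ (β t) := by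
    simp only [hβ₁def, if_neg hta, if_neg htb]
  rw [hβ₁t] at hbnd
  have hlt : infDist (Ψ (β t)) Z' < max 0 m + 1 := by
    have := le_max_right (0:ℝ) m
    linarith
  obtain ⟨z', hz', hz'd⟩ := (Metric.infDist_lt_iff hZ').mp hlt
  have hfinal : dist (β t) (Φ z') ≤ K * (max 0 m + 1 + 2 * C) := by
    have h5 := hlow (β t) (Φ z')
    have h6 := hΦ z'
    have h7 : dist (Ψ (β t)) (Ψ (Φ z')) ≤ dist (Ψ (β t)) z' + C := by
      have h8 := dist_triangle (Ψ (β t)) z' (Ψ (Φ z'))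
      have h9 := dist_comm z' (Ψ (Φ z'))
      linarith
    have h10 : dist (Ψ (β t)) (Ψ (Φ z')) + C ≤ max 0 m + 1 + 2 * C := by linarith
    nlinarith [mul_le_mul_of_nonneg_left h10 hK0.le]
  calc infDist (β t) (Φ '' Z') ≤ dist (β t) (Φ z') :=
        Metric.infDist_le_dist_of_mem (Set.mem_image_of_mem _ hz')
    _ ≤ _ := hfinal

/-- Corollary: the topology `T(G,Y,X)` is independent of the geometric
action `G ↷ Y`. If `(G,Y,X)` and `(G,Y',X)` are Morse-injective hyperbolic projections
for the same cobounded action on `X`, then for any coarsely `G`-equivariant quasi-isometry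
`Ψ : Y → Y'`, the induced bijection `∂Ψ : ∂₁Y → ∂₁Y'` is a homeomorphism with respect to
the pullback topologies `T(G,Y,X)` and `T(G,Y',X)`. -/
theorem statement1 {G Y Y' X : Type*} [Group G]
    [MetricSpace Y] [MetricSpace Y'] [MetricSpace X]
    [MulAction G Y] [MulAction G Y'] [MulAction G X]
    [ProperSpace Y] [ProperSpace Y']
    (hYX : HyperbolicProjection G Y X) (hY'X : HyperbolicProjection G Y' X)
    (p : Y → X) (hp : InducedProjection G p) (hMI : MorseInjective p)
    (p' : Y' → X) (hp' : InducedProjection G p') (hMI' : MorseInjective p')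
    (Ψ : Y → Y') (hΨe : CoarselyEquivariant G Ψ) (hΨq : IsQuasiIsometry Ψ) :
    ∀ (dp : MorseBoundary Y → GromovBoundary X)
      (dp' : MorseBoundary Y' → GromovBoundary X)
      (dΨ : MorseBoundary Y → MorseBoundary Y'),
      IsInducedBoundaryMap p dp → IsInducedBoundaryMap p' dp' →
      IsInducedMorseBoundaryMap Ψ dΨ →
      Function.Bijective dΨ ∧
      @Continuous _ _ (TopologicalSpace.induced dp (visualTopology X))
        (TopologicalSpace.induced dp' (visualTopology X)) dΨ ∧
      @IsOpenMap _ _ (TopologicalSpace.induced dp (visualTopology X))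
        (TopologicalSpace.induced dp' (visualTopology X)) dΨ := by
  intro dp dp' dΨ hdp hdp' hdΨ
  classical
  obtain ⟨K, C, hK, hC, hembΨ, hsurΨ⟩ := hΨq
  have hK0 : (0:ℝ) < K := lt_of_lt_of_le one_pos hK
  set Φ : Y' → Y := fun x => Classical.choose (hsurΨ x) with hΦdef
  have hΦ : ∀ x, dist (Ψ (Φ x)) x ≤ C := fun x => Classical.choose_spec (hsurΨ x)
  have hlowΨ : ∀ a b : Y, dist a b ≤ K * (dist (Ψ a) (Ψ b) + C) := by
    intro a b
    have h1 := (hembΨ a b).1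
    have h2 : dist a b / K ≤ dist (Ψ a) (Ψ b) + C := by linarith
    have h3 := (div_le_iff₀ hK0).mp h2
    nlinarith
  -- uniform closeness of p and p' ∘ Ψ
  obtain ⟨Cp, hCp0, hpE⟩ := hp.1
  obtain ⟨Kp, Cp2, hKp, hCp2, hpL⟩ := hp.2
  obtain ⟨Ce, hCe0, hp'E⟩ := hp'.1
  obtain ⟨Kq, Cq2, hKq, hCq2, hp'L⟩ := hp'.2
  obtain ⟨CΨ, hCΨ0, hΨE⟩ := hΨe
  obtain ⟨Kc, hKcpt, hKcov⟩ := hYX.geometricY.2.2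
  have hXiso := hYX.isometricX
  have hMex : ∃ M : ℝ, ∀ y : Y, dist (p y) (p' (Ψ y)) ≤ M := by
    rcases isEmpty_or_nonempty Y with hE | hNE
    · exact ⟨0, fun y => (hE.false y).elim⟩
    obtain ⟨y₀⟩ := hNE
    obtain ⟨R, hR⟩ := hKcpt.isBounded.subset_closedBall y₀
    set q : Y → X := fun y => p' (Ψ y) with hqdef
    have hqE : ∀ (g : G) (y : Y), dist (q (g • y)) (g • q y) ≤ Kq * CΨ + Cq2 + Ce := by
      intro g y
      have h1 := dist_triangle (p' (Ψ (g • y))) (p' (g • Ψ y)) (g • p' (Ψ y))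
      have h2 := hp'L (Ψ (g • y)) (g • Ψ y)
      have h3 := hΨE g y
      have h4 := hp'E g (Ψ y)
      have h5 : Kq * dist (Ψ (g • y)) (g • Ψ y) ≤ Kq * CΨ :=
        mul_le_mul_of_nonneg_left h3 (by linarith)
      simp only [hqdef]
      linarith
    have hqL : ∀ x y : Y, dist (q x) (q y) ≤ (Kq * K) * dist x y + (Kq * C + Cq2) := by
      intro x y
      have h2 := hp'L (Ψ x) (Ψ y)
      have h3 := (hembΨ x y).2
      have h5 : Kq * dist (Ψ x) (Ψ y) ≤ Kq * (K * dist x y + C) :=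
        mul_le_mul_of_nonneg_left h3 (by linarith)
      simp only [hqdef]
      nlinarith
    refine ⟨Cp + (Kp * R + Cp2) + dist (p y₀) (q y₀) +
      ((Kq * K) * R + (Kq * C + Cq2)) + (Kq * CΨ + Cq2 + Ce), fun y => ?_⟩
    obtain ⟨g, hg⟩ := hKcov y
    have hdR : dist (g • y) y₀ ≤ R := by
      have := hR hg
      simpa [Metric.mem_closedBall] using this
    have hiso : dist (g • p y) (g • q y) = dist (p y) (q y) := (hXiso g).dist_eq (p y) (q y)
    have htri := dist_triangle4 (g • p y) (p (g • y)) (q (g • y)) (g • q y)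
    have h1 : dist (g • p y) (p (g • y)) ≤ Cp := by
      rw [dist_comm]; exact hpE g y
    have h2 : dist (q (g • y)) (g • q y) ≤ Kq * CΨ + Cq2 + Ce := hqE g y
    have h3 := dist_triangle4 (p (g • y)) (p y₀) (q y₀) (q (g • y))
    have h4 : dist (p (g • y)) (p y₀) ≤ Kp * R + Cp2 := by
      have h4a := hpL (g • y) y₀
      have h4b : Kp * dist (g • y) y₀ ≤ Kp * R := mul_le_mul_of_nonneg_left hdR (by linarith)
      linarith
    have h5 : dist (q y₀) (q (g • y)) ≤ (Kq * K) * R + (Kq * C + Cq2) := by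
      have h6 := hqL y₀ (g • y)
      have h7 : (Kq * K) * dist y₀ (g • y) ≤ (Kq * K) * R := by
        rw [dist_comm]
        exact mul_le_mul_of_nonneg_left hdR (by nlinarith)
      linarith
    calc dist (p y) (q y) = dist (g • p y) (g • q y) := hiso.symm
      _ ≤ _ := by linarith
  obtain ⟨M, hM⟩ := hMex
  -- key: dp = dp' ∘ dΨ
  have key : ∀ γ : MorseRay Y, dp (morsePt γ) = dp' (dΨ (morsePt γ)) := by
    intro γ
    obtain ⟨h', heq⟩ := hdΨ γ
    rw [heq]
    obtain ⟨hc1, he1⟩ := hdp γ (fun i => (i : ℝ)) (fun i => Nat.cast_nonneg i)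
      (fun i j hij => Nat.cast_le.mpr hij) tendsto_natCast_atTop_atTop
    obtain ⟨hc2, he2⟩ := hdp' ⟨fun t => Ψ (γ.1 t), h'⟩ (fun i => (i : ℝ))
      (fun i => Nat.cast_nonneg i) (fun i j hij => Nat.cast_le.mpr hij)
      tendsto_natCast_atTop_atTop
    rw [← he1, ← he2]
    exact Quot.sound (asympEquiv_of_close _ _ M (fun i => hM (γ.1 i)) hc1)
  have key' : ∀ ζ : MorseBoundary Y, dp ζ = dp' (dΨ ζ) :=
    fun ζ => Quot.ind (β := fun ζ => dp ζ = dp' (dΨ ζ)) key ζ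
  -- injectivity
  have hinj : Function.Injective dΨ := by
    have haux : ∀ γ₁ γ₂ : MorseRay Y,
        dΨ (morsePt γ₁) = dΨ (morsePt γ₂) → morsePt γ₁ = morsePt γ₂ := by
      intro γ₁ γ₂ h12
      obtain ⟨h1', heq1⟩ := hdΨ γ₁
      obtain ⟨h2', heq2⟩ := hdΨ γ₂
      have h3 : morsePt (⟨fun t => Ψ (γ₁.1 t), h1'⟩ : MorseRay Y') =
          morsePt ⟨fun t => Ψ (γ₂.1 t), h2'⟩ := by
        rw [← heq1, ← heq2]; exact h12
      have h4 := morse_exact _ _ h3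
      apply Quot.sound
      apply fhd_pullback Ψ K C hK hembΨ
      rw [Set.image_image, Set.image_image]
      exact h4
    intro ζ₁ ζ₂
    induction ζ₁ using Quot.ind with
    | _ γ₁ =>
      induction ζ₂ using Quot.ind with
      | _ γ₂ => exact haux γ₁ γ₂
  -- surjectivity
  have hsurj : Function.Surjective dΨ := by
    intro η
    induction η using Quot.ind with
    | _ γ' =>
      obtain ⟨K', C', hK', hC', hqg'⟩ := γ'.2.1
      have hray : IsQuasiGeodesicRay (fun t => Φ (γ'.1 t)) := by
        refine ⟨K * K', K * (C' + 3 * C), by nlinarith, by nlinarith, ?_⟩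
        intro s hs t ht
        obtain ⟨hl, hu⟩ := hqg' s hs t ht
        have h1 := hΦ (γ'.1 s)
        have h2 := hΦ (γ'.1 t)
        constructor
        · have h3 := (hembΨ (Φ (γ'.1 s)) (Φ (γ'.1 t))).2
          have h4 := dist_triangle4 (γ'.1 s) (Ψ (Φ (γ'.1 s))) (Ψ (Φ (γ'.1 t))) (γ'.1 t)
          have h5 := dist_comm (Ψ (Φ (γ'.1 s))) (γ'.1 s)
          have hΦlow : dist (γ'.1 s) (γ'.1 t) ≤
              K * dist (Φ (γ'.1 s)) (Φ (γ'.1 t)) + 3 * C := by linarith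
          exact qgLowerHelper K K' C' (3 * C) |s - t| _ _ hK hC' (by linarith) hl hΦlow
        · have hlo := hlowΨ (Φ (γ'.1 s)) (Φ (γ'.1 t))
          have h3 : dist (Ψ (Φ (γ'.1 s))) (Ψ (Φ (γ'.1 t))) ≤
              dist (γ'.1 s) (γ'.1 t) + 2 * C := by
            have h4 := dist_triangle4 (Ψ (Φ (γ'.1 s))) (γ'.1 s) (γ'.1 t) (Ψ (Φ (γ'.1 t)))
            have h5 := dist_comm (Ψ (Φ (γ'.1 s))) (γ'.1 s)
            have h6 := dist_comm (γ'.1 t) (Ψ (Φ (γ'.1 t)))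
            linarith
          have h7 : dist (Ψ (Φ (γ'.1 s))) (Ψ (Φ (γ'.1 t))) + C ≤
              K' * |s - t| + C' + 3 * C := by linarith
          nlinarith [mul_le_mul_of_nonneg_left h7 hK0.le]
      have hmorse : IsMorseSet ((fun t => Φ (γ'.1 t)) '' Ici 0) := by
        have himg : (fun t => Φ (γ'.1 t)) '' Ici 0 = Φ '' (γ'.1 '' Ici 0) := by
          rw [Set.image_image]
        rw [himg]
        exact morse_image Ψ Φ K C hK hC hembΨ hΦ _
          ⟨γ'.1 0, Set.mem_image_of_mem _ Set.self_mem_Ici⟩ γ'.2.2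
      refine ⟨morsePt ⟨fun t => Φ (γ'.1 t), hray, hmorse⟩, ?_⟩
      obtain ⟨h', heq⟩ := hdΨ ⟨fun t => Φ (γ'.1 t), hray, hmorse⟩
      rw [heq]
      exact Quot.sound (fhd_of_ptwise (fun t => Ψ (Φ (γ'.1 t))) γ'.1 C
        (fun t => hΦ (γ'.1 t)))
  -- topology
  have hfun : dp = fun ζ => dp' (dΨ ζ) := funext key'
  have htop : TopologicalSpace.induced dp (visualTopology X) =
      TopologicalSpace.induced dΨ (TopologicalSpace.induced dp' (visualTopology X)) := by
    rw [induced_compose, hfun]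
    rfl
  refine ⟨⟨hinj, hsurj⟩, ?_, ?_⟩
  · exact continuous_iff_le_induced.mpr (le_of_eq htop)
  · intro U hU
    rw [htop] at hU
    obtain ⟨V, hV, rfl⟩ := hU
    rwa [Set.image_preimage_eq V hsurj]
end
end

section
/- Let (G,Y,X) be a hyperbolic projection and H ≤ G a subgroup of finite index. Then the restricted actions of H on Y and X make (H,Y,X) a hyperbolic projection (H acts geometrically on Y and coboundedly by isometries on X), and for every sublinear function κ, (G,Y,X) is κ-injective if and only if (H,Y,X) is κ-injective. -/
noncomputable section

open Filter Metric Set Topology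

/-! ### Auxiliary lemmas for Statement 5 -/

section Statement5Aux

variable {G Y X : Type*} [Group G] [MetricSpace Y] [MetricSpace X]
  [MulAction G Y] [MulAction G X] (H : Subgroup G)

lemma stmt5_mem (g : G) : (((g : G ⧸ H)).out)⁻¹ * g ∈ H :=
  QuotientGroup.eq.mp (QuotientGroup.out_eq' (g : G ⧸ H))

/-- Coset decomposition: every `g : G` can be written as `h * s` with `h ∈ H` and
`s = ((g⁻¹ : G⧸H).out)⁻¹`. -/
lemma stmt5_decomp (g : G) :
    ∃ h : H, (h : G) * (((g⁻¹ : G) : G ⧸ H).out)⁻¹ = g :=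
  ⟨⟨((((g⁻¹ : G) : G ⧸ H).out)⁻¹ * g⁻¹)⁻¹, H.inv_mem (stmt5_mem H g⁻¹)⟩, by group⟩

/-- If `G` acts cocompactly and by isometries on `Y` and `H ≤ G` has finite index,
then `H` acts cocompactly on `Y`. -/
lemma stmt5_cocompact (hiso : IsometricAction G Y) (hcc : CocompactAction G Y)
    [H.FiniteIndex] : CocompactAction H Y := by
  obtain ⟨K, hKcpt, hKcov⟩ := hcc
  refine ⟨⋃ q : G ⧸ H, (fun y => (q.out)⁻¹ • y) '' K, ?_, ?_⟩
  · exact isCompact_iUnion fun q => hKcpt.image (hiso _).continuous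
  · intro y
    obtain ⟨g, hg⟩ := hKcov y
    refine ⟨⟨((g : G ⧸ H).out)⁻¹ * g, stmt5_mem H g⟩,
      Set.mem_iUnion.mpr ⟨(g : G ⧸ H), ⟨g • y, hg, ?_⟩⟩⟩
    show ((g : G ⧸ H).out)⁻¹ • (g • y) = (((g : G ⧸ H).out)⁻¹ * g) • y
    rw [mul_smul]

/-- If `G` acts coboundedly by isometries on `X` and `H ≤ G` has finite index,
then `H` acts coboundedly on `X`. -/
lemma stmt5_cobounded (hiso : IsometricAction G X) (hcb : CoboundedAction G X)
    [H.FiniteIndex] : CoboundedAction H X := by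
  obtain ⟨B, hBb, hBcov⟩ := hcb
  refine ⟨⋃ q : G ⧸ H, (fun x => (q.out)⁻¹ • x) '' B, ?_, ?_⟩
  · exact Bornology.isBounded_iUnion.mpr fun q => (hiso _).lipschitz.isBounded_image hBb
  · intro x
    obtain ⟨g, hg⟩ := hBcov x
    refine ⟨⟨((g : G ⧸ H).out)⁻¹ * g, stmt5_mem H g⟩,
      Set.mem_iUnion.mpr ⟨(g : G ⧸ H), ⟨g • x, hg, ?_⟩⟩⟩
    show ((g : G ⧸ H).out)⁻¹ • (g • x) = (((g : G ⧸ H).out)⁻¹ * g) • x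
    rw [mul_smul]

/-- A coarsely `H`-equivariant coarsely Lipschitz map is automatically coarsely
`G`-equivariant when `H` has finite index in `G`. -/
lemma stmt5_upgrade [H.FiniteIndex]
    (isoY : IsometricAction G Y) (isoX : IsometricAction G X)
    (hcc : CocompactAction H Y) (o : Y)
    {p : Y → X} (hp : InducedProjection H p) : CoarselyEquivariant G p := by
  obtain ⟨⟨C₀, hC₀, heq⟩, Kp, C₁, hKp, hC₁, hlip⟩ := hp
  obtain ⟨Kc, hKcpt, hKcov⟩ := hcc
  obtain ⟨M, hM⟩ := (Metric.isBounded_iff_subset_closedBall o).mp hKcpt.isBounded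
  set s : G ⧸ H → G := fun q => (q.out)⁻¹ with hs
  obtain ⟨M₁, hM₁⟩ := (Set.finite_range (fun q => dist (s q • o) o)).bddAbove
  obtain ⟨M₂, hM₂⟩ := (Set.finite_range (fun q => dist (p o) (s q • p o))).bddAbove
  have hM₁' : ∀ q, dist (s q • o) o ≤ M₁ := fun q => hM₁ (Set.mem_range_self q)
  have hM₂' : ∀ q, dist (p o) (s q • p o) ≤ M₂ := fun q => hM₂ (Set.mem_range_self q)
  have hdX : ∀ (g : G) (a b : X), dist (g • a) (g • b) = dist a b :=
    fun g a b => (isoX g).dist_eq a b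
  have hdY : ∀ (g : G) (a b : Y), dist (g • a) (g • b) = dist a b :=
    fun g a b => (isoY g).dist_eq a b
  have hKp0 : (0:ℝ) ≤ Kp := le_trans zero_le_one hKp
  set C₂ : ℝ := (Kp * (M + M₁) + C₁) + M₂ + (Kp * M + C₁) with hC₂
  -- Step 1: the bound at points of the compact set
  have step1 : ∀ (q : G ⧸ H), ∀ w ∈ Kc, dist (p (s q • w)) (s q • p w) ≤ C₂ := by
    intro q w hw
    have hw' : dist w o ≤ M := by simpa [Metric.mem_closedBall] using hM hw
    have h2 : dist (s q • w) o ≤ M + M₁ := by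
      calc dist (s q • w) o ≤ dist (s q • w) (s q • o) + dist (s q • o) o := dist_triangle _ _ _
        _ ≤ M + M₁ := by rw [hdY]; exact add_le_add hw' (hM₁' q)
    have h1 : dist (p (s q • w)) (p o) ≤ Kp * (M + M₁) + C₁ :=
      le_trans (hlip _ _) (by nlinarith [hlip (s q • w) o])
    have h3 : dist (s q • p o) (s q • p w) ≤ Kp * M + C₁ := by
      rw [hdX]
      calc dist (p o) (p w) ≤ Kp * dist o w + C₁ := hlip o w
        _ ≤ Kp * M + C₁ := by rw [dist_comm o w]; nlinarith
    calc dist (p (s q • w)) (s q • p w)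
        ≤ dist (p (s q • w)) (p o) + dist (p o) (s q • p o) + dist (s q • p o) (s q • p w) :=
          dist_triangle4 _ _ _ _
      _ ≤ (Kp * (M + M₁) + C₁) + M₂ + (Kp * M + C₁) := add_le_add (add_le_add h1 (hM₂' q)) h3
  -- Step 2: the bound at all points, for coset representatives
  have step2 : ∀ (q : G ⧸ H) (z : Y), dist (p (s q • z)) (s q • p z) ≤ C₂ + 2 * C₀ := by
    intro q z
    obtain ⟨h', hw⟩ := hKcov z
    set w : Y := (h' : G) • z with hwdef
    have hwK : w ∈ Kc := hw
    have hzw : z = (h' : G)⁻¹ • w := by rw [hwdef, inv_smul_smul]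
    set g' : G := s q * (h' : G)⁻¹ with hg'
    obtain ⟨h₂, hh₂⟩ := stmt5_decomp H g'
    set q₂ : G ⧸ H := ((g'⁻¹ : G) : G ⧸ H) with hq₂
    have hh₂' : (h₂ : G) * s q₂ = g' := hh₂
    have key1 : s q • z = (h₂ : G) • (s q₂ • w) := by
      conv_rhs => rw [← mul_smul, hh₂', hg', mul_smul]
      rw [← hzw]
    have key2 : (h₂ : G) • (s q₂ • p w) = s q • ((h' : G)⁻¹ • p w) := by
      rw [← mul_smul, hh₂', hg', mul_smul]
    have t1 : dist (p (s q • z)) ((h₂ : G) • p (s q₂ • w)) ≤ C₀ := by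
      rw [key1]; exact heq h₂ _
    have t2 : dist ((h₂ : G) • p (s q₂ • w)) ((h₂ : G) • (s q₂ • p w)) ≤ C₂ := by
      rw [hdX]; exact step1 q₂ w hwK
    have t3 : dist ((h₂ : G) • (s q₂ • p w)) (s q • p z) ≤ C₀ := by
      rw [key2, hdX, hzw, dist_comm]
      exact heq h'⁻¹ w
    calc dist (p (s q • z)) (s q • p z)
        ≤ dist (p (s q • z)) ((h₂ : G) • p (s q₂ • w))
          + dist ((h₂ : G) • p (s q₂ • w)) ((h₂ : G) • (s q₂ • p w))
          + dist ((h₂ : G) • (s q₂ • p w)) (s q • p z) := dist_triangle4 _ _ _ _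
      _ ≤ C₀ + C₂ + C₀ := add_le_add (add_le_add t1 t2) t3
      _ = C₂ + 2 * C₀ := by ring
  -- Step 3: the bound for all group elements
  have step3 : ∀ (g : G) (z : Y), dist (p (g • z)) (g • p z) ≤ C₂ + 3 * C₀ := by
    intro g z
    obtain ⟨h, hh⟩ := stmt5_decomp H g
    set q : G ⧸ H := ((g⁻¹ : G) : G ⧸ H) with hq
    have hh' : (h : G) * s q = g := hh
    have key : g • z = (h : G) • (s q • z) := by rw [← mul_smul, hh']
    have key2 : g • p z = (h : G) • (s q • p z) := by rw [← mul_smul, hh']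
    have t1 : dist (p (g • z)) ((h : G) • p (s q • z)) ≤ C₀ := by
      rw [key]; exact heq h _
    have t2 : dist ((h : G) • p (s q • z)) (g • p z) ≤ C₂ + 2 * C₀ := by
      rw [key2, hdX]; exact step2 q z
    calc dist (p (g • z)) (g • p z)
        ≤ dist (p (g • z)) ((h : G) • p (s q • z))
          + dist ((h : G) • p (s q • z)) (g • p z) := dist_triangle _ _ _
      _ ≤ C₀ + (C₂ + 2 * C₀) := add_le_add t1 t2
      _ = C₂ + 3 * C₀ := by ring
  exact ⟨max (C₂ + 3 * C₀) 0, le_max_right _ _,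
    fun g y => le_max_of_le_left (step3 g y)⟩

end Statement5Aux

/-- Restriction to a finite index subgroup.
If `(G,Y,X)` is a hyperbolic projection and `H ≤ G` has finite index, then the restricted
actions make `(H,Y,X)` a hyperbolic projection, and for every sublinear `κ`, `(G,Y,X)` is
`κ`-injective (i.e. every induced projection map of `(G,Y,X)` is `κ`-injective) if and only
if `(H,Y,X)` is `κ`-injective. -/
theorem statement5 {G Y X : Type*} [Group G] [MetricSpace Y] [MetricSpace X]
    [MulAction G Y] [MulAction G X]
    (hYX : HyperbolicProjection G Y X)
    (H : Subgroup G) (hH : H.FiniteIndex) (o : Y) :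
    HyperbolicProjection H Y X ∧
    ∀ κ : ℝ → ℝ, IsSublinear κ →
      ((∀ p : Y → X, InducedProjection G p → KappaInjective o κ p) ↔
        (∀ p : Y → X, InducedProjection H p → KappaInjective o κ p)) := by
  haveI := hH
  haveI := hYX.fg
  obtain ⟨isoY, pdG, ccY⟩ := hYX.geometricY
  have hccH : CocompactAction H Y := stmt5_cocompact H isoY ccY
  have pdH : ProperlyDiscontinuousSMul H Y :=
    ⟨fun hK hL => Set.Finite.preimage (f := (Subtype.val : H → G)) Subtype.val_injective.injOn
      (pdG.finite_disjoint_inter_image hK hL)⟩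
  have hproj : HyperbolicProjection H Y X :=
    { fg := inferInstance
      geodesicY := hYX.geodesicY
      geometricY := ⟨fun h => isoY (h : G), pdH, hccH⟩
      isometricX := fun h => hYX.isometricX (h : G)
      coboundedX := stmt5_cobounded H hYX.isometricX hYX.coboundedX
      hyperbolicX := hYX.hyperbolicX
      ruledX := hYX.ruledX }
  refine ⟨hproj, fun κ _ => ⟨fun hGinj p hpH => ?_, fun hHinj p hpG => ?_⟩⟩
  · -- upgrade an `H`-induced projection to a `G`-induced one
    exact hGinj p ⟨stmt5_upgrade H isoY hYX.isometricX hccH o hpH, hpH.2⟩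
  · -- restrict a `G`-induced projection to `H`
    obtain ⟨⟨C, hC, hC'⟩, hlip⟩ := hpG
    exact hHinj p ⟨⟨C, hC, fun h y => hC' (h : G) y⟩, hlip⟩
end
end

section
/- Let (G,[μ]) be a coarse median group such that ∂_κG has μ-median representatives, fix a basepoint o and D ≥ 0, and for each ζ ∈ ∂_κG fix a D-median quasi-geodesic ray h_ζ starting at o and representing ζ. For ξ ∈ ∂_κG and r ≥ 0, set U_r(ξ) := {ζ ∈ ∂_κG : ∃ s₀,t₀ ∈ ℝ≥0 such that for all s ≥ s₀ and t ≥ t₀, d_G(o, μ(o, h_ζ(s), h_ξ(t))) ≥ r}. Then for every sequence (ξ_n) and point ξ in ∂_κG: liminf over n of sup{d_G(o, μ(o, h_{ξ_n}(s), h_ξ(t))) : s,t ∈ ℝ≥0} = ∞ (i.e. ξ_n → ξ in the coarse median topology T_med) if and only if for every r > 0 there exists N such that ξ_n ∈ U_r(ξ) for all n ≥ N. In other words, {U_r(ξ) : r > 0} is a neighborhood basis of ξ in (∂_κG, T_med). -/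
noncomputable section

open Filter Metric Set Topology

section Statement7Aux

variable {G : Type*} [MetricSpace G]

lemma median_aux_absorb (μ : G → G → G → G)
    (hsym : ∀ a b c : G, μ a a b = a ∧ μ a b c = μ b a c ∧ μ a b c = μ b c a)
    (o x : G) : μ o o x = o := (hsym o x x).1

lemma median_swap12 (μ : G → G → G → G)
    (hsym : ∀ a b c : G, μ a a b = a ∧ μ a b c = μ b a c ∧ μ a b c = μ b c a)
    (a b c : G) : μ a b c = μ b a c := (hsym a b c).2.1

lemma median_cyc (μ : G → G → G → G)
    (hsym : ∀ a b c : G, μ a a b = a ∧ μ a b c = μ b a c ∧ μ a b c = μ b c a)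
    (a b c : G) : μ a b c = μ b c a := (hsym a b c).2.2

lemma median_swap23 (μ : G → G → G → G)
    (hsym : ∀ a b c : G, μ a a b = a ∧ μ a b c = μ b a c ∧ μ a b c = μ b c a)
    (a b c : G) : μ a b c = μ a c b := by
  rw [median_cyc μ hsym a b c, median_cyc μ hsym a c b, median_swap12 μ hsym c b a]

/-- `d(o, μ(o,x,y)) ≤ C d(o,y) + C`. -/
lemma median_dist_le (μ : G → G → G → G) (C : ℝ)
    (hsym : ∀ a b c : G, μ a a b = a ∧ μ a b c = μ b a c ∧ μ a b c = μ b c a)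
    (hlip : ∀ a b c x : G, dist (μ a b c) (μ x b c) ≤ C * dist a x + C)
    (o x y : G) : dist o (μ o x y) ≤ C * dist o y + C := by
  have h1 : μ o x y = μ y o x := by
    rw [median_cyc μ hsym o x y, median_cyc μ hsym x y o]
  have h2 := hlip y o x o
  rw [median_aux_absorb μ hsym o x] at h2
  rw [h1, dist_comm]
  calc dist (μ y o x) o ≤ C * dist y o + C := h2
    _ = C * dist o y + C := by rw [dist_comm y o]

/-- Key step: if `p` is approximately between `o` and `q` (within `D`), then
`d(o, μ(o,p,c)) ≤ C·d(o, μ(o,q,c)) + (C·D + 3C)`. -/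
lemma median_key (μ : G → G → G → G) (C D : ℝ) (hC : 1 ≤ C) (hD : 0 ≤ D)
    (hsym : ∀ a b c : G, μ a a b = a ∧ μ a b c = μ b a c ∧ μ a b c = μ b c a)
    (hfive : ∀ a b c x : G, dist (μ (μ a x b) x c) (μ a x (μ b x c)) ≤ C)
    (hlip : ∀ a b c x : G, dist (μ a b c) (μ x b c) ≤ C * dist a x + C)
    (o p q c : G) (hpq : dist p (μ o p q) ≤ D) :
    dist o (μ o p c) ≤ C * dist o (μ o q c) + (C * D + 3 * C) := by
  have hC0 : (0:ℝ) ≤ C := le_trans zero_le_one hC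
  have t1 : dist (μ o p c) (μ o (μ o p q) c) ≤ C * D + C := by
    have h2 := hlip p o c (μ o p q)
    rw [← median_swap12 μ hsym o p c, ← median_swap12 μ hsym o (μ o p q) c] at h2
    have hmul : C * dist p (μ o p q) ≤ C * D := mul_le_mul_of_nonneg_left hpq hC0
    linarith
  have t2 : dist (μ o (μ o p q) c) (μ o p (μ o q c)) ≤ C := by
    have h5 := hfive p q c o
    rw [median_swap12 μ hsym p o q, median_swap12 μ hsym q o c,
      median_swap12 μ hsym (μ o p q) o c, median_swap12 μ hsym p o (μ o q c)] at h5
    exact h5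
  have t3 : dist o (μ o p (μ o q c)) ≤ C * dist o (μ o q c) + C :=
    median_dist_le μ C hsym hlip o p (μ o q c)
  have htri := dist_triangle4 o (μ o p (μ o q c)) (μ o (μ o p q) c) (μ o p c)
  have e1 : dist (μ o (μ o p q) c) (μ o p c) = dist (μ o p c) (μ o (μ o p q) c) :=
    dist_comm _ _
  have e2 : dist (μ o p (μ o q c)) (μ o (μ o p q) c)
      = dist (μ o (μ o p q) c) (μ o p (μ o q c)) := dist_comm _ _
  linarith

lemma realMedian_eq_mid {a b : ℝ} (ha : 0 ≤ a) (hab : a ≤ b) : realMedian 0 a b = a := by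
  have h1 : min (0:ℝ) a = 0 := min_eq_left ha
  have h2 : max (0:ℝ) a = a := max_eq_right ha
  have h3 : min a b = a := min_eq_left hab
  unfold realMedian
  rw [h1, h2, h3]
  exact max_eq_right ha

end Statement7Aux

/-- Lemma: `{U_r(ξ) | r > 0}` is a neighborhood basis of `ξ` in the
coarse median topology `T_med`. `G` is a finitely generated group carrying a word
metric (left multiplication acts by isometries), with a `G`-invariant coarse median `μ`,
`κ` is sublinear, and for each `ζ ∈ ∂_κ G` we fix a `D`-median quasi-geodesic ray `h ζ`
starting at `o` and representing `ζ`. Then for a sequence `ξ_n` and a point `ξ`,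
`liminf_n sup { d(o, μ(o, h_{ξ_n}(s), h_ξ(t))) | s,t ≥ 0 } = ∞` (i.e. `ξ_n → ξ` in
`T_med`) if and only if for every `r > 0` the `ξ_n` eventually lie in `U_r(ξ)`. -/
theorem statement7 {G : Type*} [Group G] [MetricSpace G]
    (hfg : Group.FG G)
    (hword : ∀ g : G, Isometry (fun x : G => g * x))
    (μ : G → G → G → G) (hμ : IsCoarseMedian μ)
    (hμinv : ∃ C : ℝ, 0 ≤ C ∧ ∀ g a b c : G,
      dist (g * μ a b c) (μ (g * a) (g * b) (g * c)) ≤ C)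
    (κ : ℝ → ℝ) (hκ : IsSublinear κ) (o : G) (D : ℝ) (hD : 0 ≤ D)
    (h : KappaBoundary G o κ → KappaMorseRay G o κ)
    (hrep : ∀ ζ, kappaPt (h ζ) = ζ)
    (hstart : ∀ ζ, (h ζ).1 0 = o)
    (hmed : ∀ ζ, IsMedianRayWith D μ (h ζ).1) :
    ∀ (ξseq : ℕ → KappaBoundary G o κ) (ξ : KappaBoundary G o κ),
      (Filter.liminf (fun n =>
          ⨆ s ∈ Ici (0 : ℝ), ⨆ t ∈ Ici (0 : ℝ),
            edist o (μ o ((h (ξseq n)).1 s) ((h ξ).1 t))) Filter.atTop = (⊤ : ENNReal)) ↔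
      (∀ r : ℝ, 0 < r → ∃ N : ℕ, ∀ n ≥ N,
        ξseq n ∈ { ζ : KappaBoundary G o κ | ∃ s₀ t₀ : ℝ, 0 ≤ s₀ ∧ 0 ≤ t₀ ∧
          ∀ s ≥ s₀, ∀ t ≥ t₀, r ≤ dist o (μ o ((h ζ).1 s) ((h ξ).1 t)) }) := by
  obtain ⟨C₀, hC₀0, hsym, hfive, hlip⟩ := hμ
  -- upgrade the constant so that it is ≥ 1
  set C : ℝ := C₀ + 1 with hCdef
  have hC : 1 ≤ C := by simp [hCdef]; linarith
  have hC0 : (0:ℝ) ≤ C := le_trans zero_le_one hC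
  have hfive' : ∀ a b c x : G, dist (μ (μ a x b) x c) (μ a x (μ b x c)) ≤ C := by
    intro a b c x; have := hfive a b c x; linarith
  have hlip' : ∀ a b c x : G, dist (μ a b c) (μ x b c) ≤ C * dist a x + C := by
    intro a b c x
    have h1 := hlip a b c x
    have h2 : C₀ * dist a x ≤ C * dist a x :=
      mul_le_mul_of_nonneg_right (by linarith) dist_nonneg
    linarith
  intro ξseq ξ
  set E : ℝ := C * D + 3 * C with hEdef
  have hE0 : 0 ≤ E := by
    have : 0 ≤ C * D := mul_nonneg hC0 hD
    simp [hEdef]; linarith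
  -- betweenness on the rays, from the median-ray property
  have hbetween : ∀ (ζ : KappaBoundary G o κ) (a b : ℝ), 0 ≤ a → a ≤ b →
      dist ((h ζ).1 a) (μ o ((h ζ).1 a) ((h ζ).1 b)) ≤ D := by
    intro ζ a b ha hab
    have hm := hmed ζ 0 Set.self_mem_Ici a (Set.mem_Ici.mpr ha) b (Set.mem_Ici.mpr (le_trans ha hab))
    rw [realMedian_eq_mid ha hab, hstart ζ] at hm
    exact hm
  -- the main monotonicity estimate
  have hmain : ∀ (ζ : KappaBoundary G o κ) (s₀ t₀ s t : ℝ), 0 ≤ s₀ → 0 ≤ t₀ →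
      s₀ ≤ s → t₀ ≤ t →
      dist o (μ o ((h ζ).1 s₀) ((h ξ).1 t₀))
        ≤ C * (C * dist o (μ o ((h ζ).1 s) ((h ξ).1 t)) + E) + E := by
    intro ζ s₀ t₀ s t hs₀ ht₀ hs ht
    have step1 : dist o (μ o ((h ζ).1 s₀) ((h ξ).1 t₀))
        ≤ C * dist o (μ o ((h ζ).1 s) ((h ξ).1 t₀)) + E :=
      median_key μ C D hC hD hsym hfive' hlip' o _ _ _ (hbetween ζ s₀ s hs₀ hs)
    have step2 : dist o (μ o ((h ξ).1 t₀) ((h ζ).1 s))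
        ≤ C * dist o (μ o ((h ξ).1 t) ((h ζ).1 s)) + E :=
      median_key μ C D hC hD hsym hfive' hlip' o _ _ _ (hbetween ξ t₀ t ht₀ ht)
    rw [median_swap23 μ hsym o ((h ξ).1 t₀) ((h ζ).1 s),
      median_swap23 μ hsym o ((h ξ).1 t) ((h ζ).1 s)] at step2
    have hCm : C * dist o (μ o ((h ζ).1 s) ((h ξ).1 t₀))
        ≤ C * (C * dist o (μ o ((h ζ).1 s) ((h ξ).1 t)) + E) :=
      mul_le_mul_of_nonneg_left step2 hC0
    linarith
  constructor
  · -- forward direction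
    intro hlim r hr
    set R : ℝ := C * (C * r + E) + E with hRdef
    have hR0 : 0 ≤ R := by
      have h1 : 0 ≤ C * r := mul_nonneg hC0 (le_of_lt hr)
      have h2 : 0 ≤ C * (C * r + E) := mul_nonneg hC0 (by linarith)
      linarith
    have hRlt : (ENNReal.ofReal R) < Filter.liminf (fun n =>
        ⨆ s ∈ Ici (0 : ℝ), ⨆ t ∈ Ici (0 : ℝ),
          edist o (μ o ((h (ξseq n)).1 s) ((h ξ).1 t))) Filter.atTop := by
      rw [hlim]; exact ENNReal.ofReal_lt_top
    have hev := Filter.eventually_lt_of_lt_liminf hRlt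
    obtain ⟨N, hN⟩ := (Filter.eventually_atTop).mp hev
    refine ⟨N, fun n hn => ?_⟩
    have hlt := hN n hn
    simp only [lt_iSup_iff] at hlt
    obtain ⟨s₀, hs₀, t₀, ht₀, hlt⟩ := hlt
    rw [edist_dist] at hlt
    have hs₀' : (0:ℝ) ≤ s₀ := hs₀
    have ht₀' : (0:ℝ) ≤ t₀ := ht₀
    have hRd : R < dist o (μ o ((h (ξseq n)).1 s₀) ((h ξ).1 t₀)) :=
      (ENNReal.ofReal_lt_ofReal_iff_of_nonneg hR0).mp hlt
    refine ⟨s₀, t₀, hs₀', ht₀', fun s hs t ht => ?_⟩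
    have hm := hmain (ξseq n) s₀ t₀ s t hs₀' ht₀' hs ht
    by_contra hcon
    push_neg at hcon
    have hCC : 0 < C * C := mul_pos (lt_of_lt_of_le zero_lt_one hC) (lt_of_lt_of_le zero_lt_one hC)
    nlinarith [hm, hRd, hcon]
  · -- backward direction
    intro hU
    apply ENNReal.eq_top_of_forall_nnreal_le
    intro M
    obtain ⟨N, hN⟩ := hU ((M : ℝ) + 1) (by positivity)
    apply Filter.le_liminf_of_le (by isBoundedDefault)
    rw [Filter.eventually_atTop]
    refine ⟨N, fun n hn => ?_⟩
    obtain ⟨s₀, t₀, hs₀, ht₀, hd⟩ := hN n hn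
    have hdist := hd s₀ le_rfl t₀ le_rfl
    have h1 : (M : ENNReal) ≤ edist o (μ o ((h (ξseq n)).1 s₀) ((h ξ).1 t₀)) := by
      rw [edist_dist, ← ENNReal.ofReal_coe_nnreal]
      exact ENNReal.ofReal_le_ofReal (by linarith)
    refine le_trans h1 ?_
    exact le_iSup_of_le s₀ (le_iSup_of_le hs₀ (le_iSup_of_le t₀ (le_iSup_of_le ht₀ le_rfl)))
end
end

section
/- Let G be a group with two cobounded isometric actions on metric spaces X and X' that are equivalent, i.e. X ⪯ X' and X' ⪯ X (there exist coarsely G-equivariant coarsely Lipschitz maps in both directions). Then every coarsely G-equivariant, coarsely Lipschitz map X → X' is a quasi-isometry. -/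
noncomputable section

open Filter Metric Set Topology

/-- Composition of coarsely Lipschitz maps is coarsely Lipschitz. -/
lemma coarselyLipschitz_comp {X X' X'' : Type*} [MetricSpace X] [MetricSpace X']
    [MetricSpace X''] {f : X → X'} {u : X' → X''}
    (hf : CoarselyLipschitz f) (hu : CoarselyLipschitz u) : CoarselyLipschitz (u ∘ f) := by
  obtain ⟨K, C, hK, hC, hfl⟩ := hf
  obtain ⟨K', C', hK', hC', hul⟩ := hu
  refine ⟨K' * K, K' * C + C', by nlinarith,
    by positivity, fun x y => ?_⟩
  calc dist (u (f x)) (u (f y)) ≤ K' * dist (f x) (f y) + C' := hul _ _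
    _ ≤ K' * (K * dist x y + C) + C' := by nlinarith [hfl x y, dist_nonneg (x := f x) (y := f y)]
    _ = K' * K * dist x y + (K' * C + C') := by ring

/-- Composition of coarsely equivariant maps (outer map coarsely Lipschitz). -/
lemma coarselyEquivariant_comp {G X X' X'' : Type*} [Group G] [MetricSpace X]
    [MetricSpace X'] [MetricSpace X''] [MulAction G X] [MulAction G X'] [MulAction G X'']
    {f : X → X'} {u : X' → X''} (hf : CoarselyEquivariant G f)
    (hu1 : CoarselyEquivariant G u) (hu2 : CoarselyLipschitz u) :
    CoarselyEquivariant G (u ∘ f) := by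
  obtain ⟨Cf, hCf, hfe⟩ := hf
  obtain ⟨Cu, hCu, hue⟩ := hu1
  obtain ⟨K, C, hK, hC, hul⟩ := hu2
  refine ⟨K * Cf + C + Cu, by positivity, fun g x => ?_⟩
  calc dist (u (f (g • x))) (g • u (f x))
      ≤ dist (u (f (g • x))) (u (g • f x)) + dist (u (g • f x)) (g • u (f x)) :=
        dist_triangle _ _ _
    _ ≤ (K * dist (f (g • x)) (g • f x) + C) + Cu := add_le_add (hul _ _) (hue g _)
    _ ≤ (K * Cf + C) + Cu := by nlinarith [hfe g x]
    _ = K * Cf + C + Cu := by ring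

/-- A coarsely equivariant, coarsely Lipschitz self-map of a cobounded isometric
`G`-space is at uniformly bounded distance from the identity. -/
lemma dist_self_map_le {G X : Type*} [Group G] [MetricSpace X] [MulAction G X]
    (hiso : IsometricAction G X) (hcb : CoboundedAction G X)
    {w : X → X} (hw1 : CoarselyEquivariant G w) (hw2 : CoarselyLipschitz w) :
    ∃ M : ℝ, 0 ≤ M ∧ ∀ x : X, dist (w x) x ≤ M := by
  rcases isEmpty_or_nonempty X with hE | hN
  · exact ⟨0, le_refl 0, fun x => hE.elim x⟩
  obtain ⟨B, hB, hcover⟩ := hcb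
  obtain ⟨Cw, hCw, hwe⟩ := hw1
  obtain ⟨K, C, hK, hC, hwl⟩ := hw2
  obtain ⟨r, hr⟩ := Metric.isBounded_iff.mp hB
  obtain ⟨g₀, hg₀⟩ := hcover (Classical.arbitrary X)
  set b₀ : X := g₀ • Classical.arbitrary X with hb₀
  have hrb : 0 ≤ r := by
    have := hr hg₀ hg₀; simpa using this
  refine ⟨Cw + (K * r + C) + dist (w b₀) b₀ + r, by positivity, fun x => ?_⟩
  obtain ⟨g, hg⟩ := hcover x
  have hdist : dist (w x) x = dist (g • w x) (g • x) := ((hiso g).dist_eq _ _).symm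
  have h1 : dist (g • w x) (w (g • x)) ≤ Cw := by
    rw [dist_comm]; exact hwe g x
  have h2 : dist (w (g • x)) (w b₀) ≤ K * r + C := by
    have := hwl (g • x) b₀
    have hd : dist (g • x) b₀ ≤ r := hr hg hg₀
    nlinarith
  have h4 : dist b₀ (g • x) ≤ r := by rw [dist_comm]; exact hr hg hg₀
  calc dist (w x) x = dist (g • w x) (g • x) := hdist
    _ ≤ dist (g • w x) (w (g • x)) + dist (w (g • x)) b₀ + dist b₀ (g • x) :=
        dist_triangle4 _ _ _ _
    _ ≤ dist (g • w x) (w (g • x)) + (dist (w (g • x)) (w b₀) + dist (w b₀) b₀)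
        + dist b₀ (g • x) := by
        have := dist_triangle (w (g • x)) (w b₀) b₀; linarith
    _ ≤ Cw + (K * r + C + dist (w b₀) b₀) + r := by linarith
    _ = Cw + (K * r + C) + dist (w b₀) b₀ + r := by ring

/-- Equivalent cobounded actions: coarsely equivariant coarsely Lipschitz
maps between them are quasi-isometries. If the cobounded isometric actions of `G` on `X`
and `X'` satisfy `X ⪯ X'` and `X' ⪯ X`, then every coarsely `G`-equivariant coarsely
Lipschitz map `X → X'` is a quasi-isometry. -/
theorem statement12 {G X X' : Type*} [Group G] [MetricSpace X] [MetricSpace X']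
    [MulAction G X] [MulAction G X']
    (hisoX : IsometricAction G X) (hisoX' : IsometricAction G X')
    (hcbX : CoboundedAction G X) (hcbX' : CoboundedAction G X')
    (u : X' → X) (hu1 : CoarselyEquivariant G u) (hu2 : CoarselyLipschitz u)
    (v : X → X') (hv1 : CoarselyEquivariant G v) (hv2 : CoarselyLipschitz v) :
    ∀ f : X → X', CoarselyEquivariant G f → CoarselyLipschitz f → IsQuasiIsometry f := by
  intro f hf1 hf2
  -- `u ∘ f : X → X` is close to the identity
  obtain ⟨M, hM, hMle⟩ := dist_self_map_le hisoX hcbX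
    (coarselyEquivariant_comp hf1 hu1 hu2) (coarselyLipschitz_comp hf2 hu2)
  -- `f ∘ u : X' → X'` is close to the identity
  obtain ⟨M', hM', hM'le⟩ := dist_self_map_le hisoX' hcbX'
    (coarselyEquivariant_comp hu1 hf1 hf2) (coarselyLipschitz_comp hu2 hf2)
  obtain ⟨Ku, Cu, hKu, hCu, hul⟩ := hu2
  obtain ⟨Kf, Cf, hKf, hCf, hfl⟩ := hf2
  have hKu0 : 0 < Ku := lt_of_lt_of_le one_pos hKu
  simp only [Function.comp_apply] at hMle hM'le
  refine ⟨max Ku Kf, Cu + 2 * M + Cf + M', le_trans hKu (le_max_left _ _),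
    by positivity, ⟨fun x y => ⟨?_, ?_⟩, fun x' => ⟨u x', ?_⟩⟩⟩
  · -- lower bound
    have key : dist x y ≤ Ku * dist (f x) (f y) + (Cu + 2 * M) := by
      have h1 : dist x y ≤ dist (u (f x)) (u (f y)) + 2 * M := by
        have t1 := hMle x
        have t2 := hMle y
        have := dist_triangle4 x (u (f x)) (u (f y)) y
        have hx : dist x (u (f x)) ≤ M := by
          rw [dist_comm]; exact t1
        have hy : dist (u (f y)) y ≤ M := t2
        linarith
      have h2 := hul (f x) (f y)
      linarith
    have hd : dist x y / max Ku Kf ≤ dist x y / Ku :=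
      div_le_div_of_nonneg_left dist_nonneg hKu0 (le_max_left _ _)
    have hdiv : dist x y / Ku ≤ dist (f x) (f y) + (Cu + 2 * M) / Ku := by
      rw [div_le_iff₀ hKu0, add_mul, div_mul_cancel₀ _ hKu0.ne']
      nlinarith [key]
    have hCdiv : (Cu + 2 * M) / Ku ≤ Cu + 2 * M + Cf + M' := by
      have : (Cu + 2 * M) / Ku ≤ Cu + 2 * M := by
        rw [div_le_iff₀ hKu0]; nlinarith
      linarith
    linarith
  · -- upper bound
    have h := hfl x y
    have hKmax : Kf * dist x y ≤ max Ku Kf * dist x y :=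
      mul_le_mul_of_nonneg_right (le_max_right _ _) dist_nonneg
    linarith
  · -- coarse surjectivity
    have := hM'le x'
    linarith
end
end
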